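/- With P, d, n and c as in the context, one has the identity of polynomials with rational coefficients P(t) = ∑_{i=0}^{n} (−t)^i · (d! / (i! · (n−i)!)) · c(i). -/

import Mathlib

open Polynomial Finset

/-- `d = n₁ + ⋯ + n_r`. -/
def dTot (r : ℕ) (np : ℕ → ℕ) : ℕ := ∑ p ∈ Finset.Icc 1 r, np p

/-- `n = 1·n₁ + 2·n₂ + ⋯ + r·n_r`, the homogeneous dimension. -/
def nHom (r : ℕ) (np : ℕ → ℕ) : ℕ := ∑ p ∈ Finset.Icc 1 r, p * np p

/-- `P(t) = ∏_{p=1}^{r} (1 − t^p)^{n_p}`. -/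
noncomputable def Ppoly (r : ℕ) (np : ℕ → ℕ) : Polynomial ℚ :=
  ∏ p ∈ Finset.Icc 1 r, (1 - X ^ p) ^ np p

/-- `∏_{p=2}^{r} (1 + t + ⋯ + t^{p−1})^{n_p}`, whose coefficients are the `a_l`. -/
noncomputable def Apoly (r : ℕ) (np : ℕ → ℕ) : Polynomial ℚ :=
  ∏ p ∈ Finset.Icc 2 r, (∑ j ∈ Finset.range p, X ^ j) ^ np p

/-- The coefficient `a_l`. -/
noncomputable def aCoeff (r : ℕ) (np : ℕ → ℕ) (l : ℕ) : ℚ := (Apoly r np).coeff l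

/-- `Q_l(i) = ∏_{j=0}^{l−1} (j − i) · ∏_{j=d+l+1}^{n} (j − i)`. -/
def Qval (r : ℕ) (np : ℕ → ℕ) (l : ℕ) (i : ℚ) : ℚ :=
  (∏ j ∈ Finset.range l, ((j : ℚ) - i)) *
    ∏ j ∈ Finset.Icc (dTot r np + l + 1) (nHom r np), ((j : ℚ) - i)

/-- `c(i) = ∑_{l=0}^{n−d} a_l · Q_l(i)`. -/
noncomputable def cVal (r : ℕ) (np : ℕ → ℕ) (i : ℚ) : ℚ :=
  ∑ l ∈ Finset.range (nHom r np - dTot r np + 1), aCoeff r np l * Qval r np l i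

/-! ### Auxiliary lemmas -/

lemma one_sub_X_pow_eq (p : ℕ) : (1 - X^p : ℚ[X]) = (1 - X) * ∑ j ∈ Finset.range p, X^j := by
  have h := geom_sum_mul (X : ℚ[X]) p
  linear_combination h

lemma prod_range_sub_fac (k l : ℕ) (hlk : l ≤ k) :
    ((k - l).factorial : ℚ) * ∏ j ∈ Finset.range l, ((j:ℚ) - k) = (-1)^l * k.factorial := by
  induction l with
  | zero => simp
  | succ l ih =>
    have hl : l ≤ k := by omega
    set Pr := ∏ j ∈ Finset.range l, ((j:ℚ) - k) with hPr
    rw [Finset.prod_range_succ, ← hPr]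
    have h1 : ((k - l).factorial : ℚ) = ((k - l : ℕ) : ℚ) * ((k - (l+1)).factorial : ℚ) := by
      rw [show k - l = (k - (l+1)) + 1 by omega, Nat.factorial_succ]
      push_cast
      ring
    have h2 : ((l:ℚ) - k) = -((k - l : ℕ) : ℚ) := by push_cast [Nat.cast_sub hl]; ring
    rw [h2]
    linear_combination Pr * h1 - ih hl

lemma prod_Icc_sub_fac (k a b : ℕ) (hk : k ≤ a) (hab : a ≤ b) :
    ((a - k).factorial : ℚ) * ∏ j ∈ Finset.Icc (a+1) b, ((j:ℚ) - k) = ((b - k).factorial : ℚ) := by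
  induction b with
  | zero =>
    have : a = 0 := by omega
    subst this
    simp
  | succ b ih =>
    rcases Nat.eq_or_lt_of_le hab with h | h
    · rw [← h]
      simp
    · have hab' : a ≤ b := by omega
      rw [Finset.prod_Icc_succ_top (by omega)]
      have h2 : ((b + 1 : ℕ):ℚ) - k = ((b + 1 - k : ℕ) : ℚ) := by
        push_cast [Nat.cast_sub (show k ≤ b + 1 by omega)]; ring
      have h3 : ((b + 1 - k).factorial : ℚ) = ((b + 1 - k : ℕ):ℚ) * ((b - k).factorial : ℚ) := by
        rw [show b + 1 - k = (b - k) + 1 by omega, Nat.factorial_succ]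
        push_cast
        ring
      push_cast at h2 ⊢
      rw [h2, h3]
      linear_combination ((b + 1 - k : ℕ):ℚ) * ih hab'

lemma icc_sub' : ∀ r : ℕ, Finset.Icc 2 r ⊆ Finset.Icc 1 r := fun r =>
  Finset.Icc_subset_Icc_left (by norm_num)

lemma dn_eq (r : ℕ) (np : ℕ → ℕ) :
    nHom r np = dTot r np + ∑ p ∈ Finset.Icc 2 r, (p - 1) * np p := by
  have h1 : ∑ p ∈ Finset.Icc 2 r, (p - 1) * np p = ∑ p ∈ Finset.Icc 1 r, (p - 1) * np p := by
    apply Finset.sum_subset (icc_sub' r)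
    intro p hp hp2
    simp only [Finset.mem_Icc] at hp hp2
    have : p = 1 := by omega
    simp [this]
  rw [h1, nHom, dTot, ← Finset.sum_add_distrib]
  apply Finset.sum_congr rfl
  intro p hp
  simp only [Finset.mem_Icc] at hp
  calc p * np p = (1 + (p-1)) * np p := by rw [show 1 + (p-1) = p by omega]
  _ = np p + (p-1) * np p := by ring

lemma d_le_n (r : ℕ) (np : ℕ → ℕ) : dTot r np ≤ nHom r np := by
  rw [dn_eq]; omega

lemma Pfactorization (r : ℕ) (np : ℕ → ℕ) :
    Ppoly r np = (1 - X) ^ (dTot r np) * Apoly r np := by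
  have h1 : Ppoly r np
      = ∏ p ∈ Finset.Icc 1 r, ((1 - X) ^ np p * (∑ j ∈ Finset.range p, X ^ j) ^ np p) := by
    unfold Ppoly
    apply Finset.prod_congr rfl
    intro p _
    rw [one_sub_X_pow_eq, mul_pow]
  rw [h1, Finset.prod_mul_distrib, Finset.prod_pow_eq_pow_sum]
  congr 1
  unfold Apoly
  symm
  apply Finset.prod_subset (icc_sub' r)
  intro p hp hp2
  simp only [Finset.mem_Icc] at hp hp2
  have : p = 1 := by omega
  simp [this]

lemma Apoly_natDegree_le (r : ℕ) (np : ℕ → ℕ) :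
    (Apoly r np).natDegree ≤ nHom r np - dTot r np := by
  have h1 : (Apoly r np).natDegree ≤ ∑ p ∈ Finset.Icc 2 r, (p - 1) * np p := by
    refine le_trans (Polynomial.natDegree_prod_le _ _) (Finset.sum_le_sum ?_)
    intro p hp
    refine le_trans (Polynomial.natDegree_pow_le) ?_
    rw [mul_comm]
    gcongr
    apply Polynomial.natDegree_sum_le_of_forall_le
    intro j hj
    simp only [Finset.mem_range] at hj
    rw [Polynomial.natDegree_X_pow]
    omega
  rw [dn_eq]
  omega

lemma aCoeff_eq_zero (r : ℕ) (np : ℕ → ℕ) {l : ℕ} (hl : nHom r np - dTot r np < l) :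
    aCoeff r np l = 0 :=
  Polynomial.coeff_eq_zero_of_natDegree_lt (lt_of_le_of_lt (Apoly_natDegree_le r np) hl)

lemma Qval_eq_zero (r : ℕ) (np : ℕ → ℕ) {l k : ℕ} (hk : k < l) :
    Qval r np l (k : ℚ) = 0 := by
  unfold Qval
  rw [Finset.prod_eq_zero (Finset.mem_range.2 hk) (sub_self (k:ℚ)), zero_mul]

lemma one_sub_X_pow_expand (d : ℕ) :
    (1 - X : ℚ[X]) ^ d = ∑ i ∈ Finset.range (d+1), C ((-1:ℚ)^i * (d.choose i : ℚ)) * X^i := by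
  have h := add_pow (-X : ℚ[X]) 1 d
  rw [show (-X + 1 : ℚ[X]) = 1 - X by ring] at h
  rw [h]
  apply Finset.sum_congr rfl
  intro i _
  rw [map_mul, map_pow, map_neg, map_one]
  simp only [map_natCast]
  ring

lemma coeff_one_sub_X_pow (d k : ℕ) :
    ((1 - X : ℚ[X]) ^ d).coeff k = (-1)^k * (d.choose k : ℚ) := by
  rw [one_sub_X_pow_expand, Polynomial.finset_sum_coeff]
  simp only [Polynomial.coeff_C_mul, Polynomial.coeff_X_pow, mul_ite, mul_one, mul_zero]
  rw [Finset.sum_ite_eq (Finset.range (d+1)) k]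
  by_cases hk : k ∈ Finset.range (d+1)
  · simp [hk]
  · simp only [hk, if_false]
    simp only [Finset.mem_range] at hk
    rw [Nat.choose_eq_zero_of_lt (by omega)]
    simp

lemma key_nat (d n k l : ℕ) (hlk : l ≤ k) (hkdl : k ≤ d + l) :
    (d.choose (k - l) : ℚ) * ((k - l).factorial : ℚ) * ((d + l - k).factorial : ℚ)
      = (d.factorial : ℚ) := by
  have h := Nat.choose_mul_factorial_mul_factorial (show k - l ≤ d by omega)
  rw [show d - (k - l) = d + l - k by omega] at h
  exact_mod_cast congrArg (fun x : ℕ => (x : ℚ)) h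

lemma keyQ (d n k l : ℕ) (hlk : l ≤ k) (hkn : k ≤ n) (hdln : d + l ≤ n) :
    (-1:ℚ)^k * ((d.factorial:ℚ) / ((k.factorial : ℚ) * ((n-k).factorial : ℚ))) *
      ((∏ j ∈ Finset.range l, ((j:ℚ) - k)) * ∏ j ∈ Finset.Icc (d+l+1) n, ((j:ℚ) - k))
    = (-1:ℚ)^(k-l) * (d.choose (k-l) : ℚ) := by
  by_cases hk : k ≤ d + l
  · have P1 := prod_range_sub_fac k l hlk
    have P2 := prod_Icc_sub_fac k (d+l) n hk hdln
    have KN := key_nat d n k l hlk hk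
    have hsign : (-1:ℚ)^(k-l) * (-1:ℚ)^l = (-1:ℚ)^k := by
      rw [← pow_add, show k - l + l = k by omega]
    have hK : (k.factorial : ℚ) ≠ 0 := Nat.cast_ne_zero.2 (Nat.factorial_ne_zero _)
    have hN : ((n-k).factorial : ℚ) ≠ 0 := Nat.cast_ne_zero.2 (Nat.factorial_ne_zero _)
    set Q1 := ∏ j ∈ Finset.range l, ((j:ℚ) - k) with hQ1
    set Q2 := ∏ j ∈ Finset.Icc (d+l+1) n, ((j:ℚ) - k) with hQ2
    have hs2 : ((-1:ℚ)^l)*((-1:ℚ)^l) = 1 := by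
      rw [← pow_add, ← two_mul, pow_mul]; norm_num
    field_simp
    linear_combination (-(d.factorial:ℚ) * Q1 * Q2) * hsign
      - ((-1:ℚ)^(k-l) * (-1:ℚ)^l * Q1 * Q2) * KN
      + ((-1:ℚ)^(k-l) * (-1:ℚ)^l * (d.choose (k-l):ℚ) * ((d+l-k).factorial:ℚ) * Q2) * P1
      + ((-1:ℚ)^(k-l) * ((-1:ℚ)^l) * ((-1:ℚ)^l) * (d.choose (k-l):ℚ) * (k.factorial:ℚ)) * P2
      + ((-1:ℚ)^(k-l) * (d.choose (k-l):ℚ) * (k.factorial:ℚ) * ((n-k).factorial:ℚ)) * hs2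
  · have h0 : (∏ j ∈ Finset.Icc (d+l+1) n, ((j:ℚ) - k)) = 0 := by
      apply Finset.prod_eq_zero (show k ∈ Finset.Icc (d+l+1) n by simp; omega)
      simp
    rw [h0, Nat.choose_eq_zero_of_lt (show d < k - l by omega)]
    simp

lemma keyQ' (r : ℕ) (np : ℕ → ℕ) (k l : ℕ) (hlk : l ≤ k) (hkn : k ≤ nHom r np)
    (hdln : dTot r np + l ≤ nHom r np) :
    (-1:ℚ)^k * (((dTot r np).factorial:ℚ) /
        ((k.factorial : ℚ) * ((nHom r np - k).factorial : ℚ))) * Qval r np l (k : ℚ)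
    = (-1:ℚ)^(k-l) * ((dTot r np).choose (k-l) : ℚ) := by
  unfold Qval
  exact keyQ (dTot r np) (nHom r np) k l hlk hkn hdln

/-- `P(t) = ∑_{i=0}^{n} (−t)^i · (d! / (i!·(n−i)!)) · c(i)` as polynomials over `ℚ`. -/
theorem stmt1 (r : ℕ) (hr : 1 ≤ r) (np : ℕ → ℕ) :
    Ppoly r np =
      ∑ i ∈ Finset.range (nHom r np + 1),
        Polynomial.C
            (((dTot r np).factorial : ℚ) /
                ((i.factorial : ℚ) * ((nHom r np - i).factorial : ℚ)) *
              cVal r np (i : ℚ)) *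
          (-Polynomial.X) ^ i := by
  have hdn := d_le_n r np
  rw [Pfactorization r np]
  ext k
  rw [Polynomial.finset_sum_coeff]
  have hnegX : ∀ q : ℚ, ∀ i : ℕ, (C q * (-X : ℚ[X])^i).coeff k
      = if k = i then q * (-1:ℚ)^i else 0 := by
    intro q i
    rw [neg_pow, show ((-1 : ℚ[X])^i) = C ((-1:ℚ)^i) by rw [map_pow, map_neg, map_one],
      show C q * (C ((-1:ℚ)^i) * X^i) = C (q * (-1:ℚ)^i) * X^i by rw [map_mul]; ring,
      Polynomial.coeff_C_mul, Polynomial.coeff_X_pow]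
    simp [mul_ite]
  simp only [hnegX]
  rw [Finset.sum_ite_eq (Finset.range (nHom r np + 1)) k]
  by_cases hkn : k ≤ nHom r np
  · rw [if_pos (Finset.mem_range.2 (by omega))]
    -- LHS coefficient via convolution
    rw [mul_comm ((1 - X : ℚ[X]) ^ dTot r np), Polynomial.coeff_mul,
      Finset.Nat.sum_antidiagonal_eq_sum_range_succ_mk]
    have hL : ∀ l, (Apoly r np).coeff l * ((1 - X : ℚ[X]) ^ dTot r np).coeff (k - l)
        = aCoeff r np l * ((-1)^(k-l) * ((dTot r np).choose (k-l) : ℚ)) := by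
      intro l
      rw [coeff_one_sub_X_pow]
      rfl
    simp only [hL]
    -- shrink both sums to range (min k (nHom-dTot) + 1)
    set m := min k (nHom r np - dTot r np) with hm
    have e1 : ∑ l ∈ Finset.range (k+1),
          aCoeff r np l * ((-1)^(k-l) * ((dTot r np).choose (k-l) : ℚ))
        = ∑ l ∈ Finset.range (m+1),
          aCoeff r np l * ((-1)^(k-l) * ((dTot r np).choose (k-l) : ℚ)) := by
      symm
      apply Finset.sum_subset (Finset.range_subset_range.2 (by omega))
      intro l hl hl2
      simp only [Finset.mem_range] at hl hl2
      rw [aCoeff_eq_zero r np (show nHom r np - dTot r np < l by omega), zero_mul]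
    have e2 : cVal r np (k : ℚ)
        = ∑ l ∈ Finset.range (m+1), aCoeff r np l * Qval r np l (k : ℚ) := by
      unfold cVal
      symm
      apply Finset.sum_subset (Finset.range_subset_range.2 (by omega))
      intro l hl hl2
      simp only [Finset.mem_range] at hl hl2
      rw [Qval_eq_zero r np (show k < l by omega), mul_zero]
    rw [e1, e2, Finset.mul_sum, Finset.sum_mul]
    apply Finset.sum_congr rfl
    intro l hl
    simp only [Finset.mem_range] at hl
    have hKQ := keyQ' r np k l (by omega) hkn (by omega)
    calc aCoeff r np l * ((-1)^(k-l) * ((dTot r np).choose (k-l) : ℚ))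
        = aCoeff r np l * ((-1:ℚ)^k * (((dTot r np).factorial:ℚ) /
            ((k.factorial : ℚ) * ((nHom r np - k).factorial : ℚ))) * Qval r np l (k : ℚ)) := by
          rw [hKQ]
      _ = ((dTot r np).factorial : ℚ) /
            ((k.factorial : ℚ) * ((nHom r np - k).factorial : ℚ)) *
            (aCoeff r np l * Qval r np l (k : ℚ)) * (-1:ℚ)^k := by ring
  · rw [if_neg (by simp; omega)]
    apply Polynomial.coeff_eq_zero_of_natDegree_lt
    calc ((1 - X : ℚ[X]) ^ dTot r np * Apoly r np).natDegree
        ≤ ((1 - X : ℚ[X]) ^ dTot r np).natDegree + (Apoly r np).natDegree :=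
          Polynomial.natDegree_mul_le
      _ ≤ dTot r np * 1 + (nHom r np - dTot r np) := by
          gcongr
          · exact le_trans Polynomial.natDegree_pow_le (by
              gcongr
              exact le_trans (Polynomial.natDegree_sub_le _ _) (by simp))
          · exact Apoly_natDegree_le r np
      _ < k := by omega
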